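/- A strict preference statement α > β is a tautology (satisfied by every hierarchical model) if and only if for every non-empty subset Y ⊆ V, ⊕_{y∈Y} α(y) > ⊕_{y∈Y} β(y). Moreover, this holds if and only if β ≥ α is a contradiction. -/

import Mathlib

/-- Aggregate `⊕_{y ∈ Y} α(y)` of an alternative `α` over a (nonempty) set of
variables `Y`, for a commutative associative operation `op`. -/
noncomputable def agg {V W : Type*} [DecidableEq V] [Nonempty W]
    (op : W → W → W) [Std.Commutative op] [Std.Associative op]
    (α : V → W) (Y : Finset V) : W :=
  if h : Y.Nonempty then (Y.erase h.choose).fold op (α h.choose) α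
  else Classical.arbitrary W

/-- `α ⪰_π β` for a hierarchical model `π` (a sequence of variable sets):
lexicographic comparison of the level-wise aggregates. -/
noncomputable def HGe {V W : Type*} [DecidableEq V] [Nonempty W] [LinearOrder W]
    (op : W → W → W) [Std.Commutative op] [Std.Associative op]
    (π : List (Finset V)) (α β : V → W) : Prop :=
  (∀ Y ∈ π, agg op α Y = agg op β Y) ∨
  ∃ i : Fin π.length, agg op α (π.get i) > agg op β (π.get i) ∧
    ∀ j : Fin π.length, (j : ℕ) < (i : ℕ) → agg op α (π.get j) = agg op β (π.get j)

/-- `α ≻_π β`: strict lexicographic comparison of the level-wise aggregates. -/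
noncomputable def HGt {V W : Type*} [DecidableEq V] [Nonempty W] [LinearOrder W]
    (op : W → W → W) [Std.Commutative op] [Std.Associative op]
    (π : List (Finset V)) (α β : V → W) : Prop :=
  ∃ i : Fin π.length, agg op α (π.get i) > agg op β (π.get i) ∧
    ∀ j : Fin π.length, (j : ℕ) < (i : ℕ) → agg op α (π.get j) = agg op β (π.get j)

/-- A hierarchical model is a non-empty sequence of non-empty sets of variables. -/
def ValidH {V : Type*} (π : List (Finset V)) : Prop :=
  π ≠ [] ∧ ∀ Y ∈ π, Y.Nonempty

/-- `α > β` is a tautology iff every nonempty set of variables has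
`⊕`-aggregate of `α` strictly above that of `β`, iff `β ≥ α` is a contradiction. -/
theorem strict_tautology_iff {V W : Type*} [DecidableEq V] [Nonempty W] [LinearOrder W]
    (op : W → W → W) [Std.Commutative op] [Std.Associative op]
    (α β : V → W) :
    ((∀ π : List (Finset V), ValidH π → HGt op π α β) ↔
      (∀ Y : Finset V, Y.Nonempty → agg op α Y > agg op β Y)) ∧
    ((∀ π : List (Finset V), ValidH π → HGt op π α β) ↔
      (∀ π : List (Finset V), ValidH π → ¬ HGe op π β α)) := by
  have key : (∀ π : List (Finset V), ValidH π → HGt op π α β) ↔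
      (∀ Y : Finset V, Y.Nonempty → agg op α Y > agg op β Y) := by
    constructor
    · intro h Y hY
      obtain ⟨i, hi, -⟩ := h [Y] ⟨by simp, by simpa using hY⟩
      have h1 := i.isLt
      simp only [List.length_singleton] at h1
      have : i = ⟨0, by simp⟩ := Fin.ext (by show i.val = 0; omega)
      subst this
      simpa using hi
    · intro h π hπ
      have hlen : 0 < π.length := List.length_pos_of_ne_nil hπ.1
      refine ⟨⟨0, hlen⟩, h _ (hπ.2 _ (List.get_mem π _)), ?_⟩
      intro j hj; exact absurd hj (Nat.not_lt_zero _)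
  refine ⟨key, key.trans ?_⟩
  constructor
  · intro h π hπ hge
    obtain ⟨hne, hval⟩ := hπ
    have hlen : 0 < π.length := List.length_pos_of_ne_nil hne
    rcases hge with heq | ⟨i, hi, -⟩
    · have hmem := List.get_mem π ⟨0, hlen⟩
      exact absurd (heq _ hmem).symm (ne_of_gt (h _ (hval _ hmem)))
    · exact absurd hi (not_lt.mpr (le_of_lt (h _ (hval _ (List.get_mem π _)))))
  · intro h Y hY
    have := h [Y] ⟨by simp, by simpa using hY⟩
    rw [HGe] at this
    push_neg at this
    obtain ⟨h1, h2⟩ := this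
    obtain ⟨Z, hZ, hneq⟩ := h1
    simp only [List.mem_singleton] at hZ
    subst hZ
    have hnlt : ¬ agg op β Z > agg op α Z := by
      intro hgt
      obtain ⟨j, hj1, -⟩ := h2 ⟨0, by simp⟩ (by simpa using hgt)
      exact absurd hj1 (Nat.not_lt_zero _)
    exact lt_of_le_of_ne (not_lt.mp hnlt) hneq
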